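/- Let r, s, d, v > 0 and f ∈ (0,1]. Define Z(l) = v·s·(1 − (s·f·Π₀(r, s·f, d)) / ((s·f + l·d)·Π₀(r, s·f + l·d, d))) for l ∈ ℕ, l ≥ 1, where Π₀(r,σ,d) = (∑_{k=0}^∞ r^k / ∏_{m=1}^{k} (σ + m·d))^{-1}. Then Z is strictly monotone increasing in l, and 0 < Z(l) < v·s for every l ≥ 1. -/

import Mathlib

open scoped BigOperators

/-- Term of the normalizing series of the birth-death queue:
`r^l / ∏_{m=1}^{l} (s + m·d)`, empty product = 1. -/
noncomputable def qterm (r s d : ℝ) (l : ℕ) : ℝ :=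
  r ^ l / ∏ m ∈ Finset.Icc 1 l, (s + (m : ℝ) * d)

/-- Stationary empty-queue probability `Π₀(r,s,d)`. -/
noncomputable def Pi0 (r s d : ℝ) : ℝ := (∑' l : ℕ, qterm r s d l)⁻¹

lemma prod_pos' {σ d : ℝ} (hσ : 0 < σ) (hd : 0 < d) (l : ℕ) :
    0 < ∏ m ∈ Finset.Icc 1 l, (σ + (m : ℝ) * d) := by
  apply Finset.prod_pos
  intro m hm
  have : (0:ℝ) ≤ (m:ℝ) * d := by positivity
  linarith

lemma qterm_pos {r σ d : ℝ} (hr : 0 < r) (hσ : 0 < σ) (hd : 0 < d) (l : ℕ) :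
    0 < qterm r σ d l := div_pos (pow_pos hr l) (prod_pos' hσ hd l)

lemma prod_lower {σ d : ℝ} (hσ : 0 < σ) (hd : 0 < d) (l : ℕ) :
    d ^ l * (l.factorial : ℝ) ≤ ∏ m ∈ Finset.Icc 1 l, (σ + (m : ℝ) * d) := by
  have h1 : ∏ m ∈ Finset.Icc 1 l, ((m : ℝ) * d) ≤ ∏ m ∈ Finset.Icc 1 l, (σ + (m : ℝ) * d) := by
    apply Finset.prod_le_prod
    · intro m hm
      have hm1 : 1 ≤ m := (Finset.mem_Icc.mp hm).1
      have : (1:ℝ) ≤ (m:ℝ) := by exact_mod_cast hm1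
      nlinarith
    · intro m hm; nlinarith [Nat.cast_nonneg (α := ℝ) m, hd.le]
  have h2 : ∏ m ∈ Finset.Icc 1 l, ((m : ℝ) * d) = d ^ l * (l.factorial : ℝ) := by
    rw [Finset.prod_mul_distrib, Finset.prod_const, Nat.card_Icc]
    simp only [Nat.add_sub_cancel]
    rw [← Nat.cast_prod, show Finset.Icc 1 l = Finset.Ico 1 (l+1) by rw [Finset.Ico_add_one_right_eq_Icc],
      Finset.prod_Ico_id_eq_factorial]
    ring
  linarith

lemma summable_qterm {r σ d : ℝ} (hr : 0 < r) (hσ : 0 < σ) (hd : 0 < d) :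
    Summable (qterm r σ d) := by
  have hb : ∀ l : ℕ, qterm r σ d l ≤ (r / d) ^ l / (l.factorial : ℝ) := by
    intro l
    have hP := prod_pos' hσ hd l
    have hlow := prod_lower hσ hd l
    have hfac : (0:ℝ) < (l.factorial : ℝ) := by exact_mod_cast l.factorial_pos
    have hdl : (0:ℝ) < d ^ l * (l.factorial : ℝ) := by positivity
    have : r ^ l / ∏ m ∈ Finset.Icc 1 l, (σ + (m : ℝ) * d)
        ≤ r ^ l / (d ^ l * (l.factorial : ℝ)) := by
      gcongr
    calc qterm r σ d l ≤ r ^ l / (d ^ l * (l.factorial : ℝ)) := this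
      _ = (r / d) ^ l / (l.factorial : ℝ) := by rw [div_pow]; ring
  exact Summable.of_nonneg_of_le (fun l => (qterm_pos hr hσ hd l).le) hb
    (Real.summable_pow_div_factorial (r / d))

lemma tsum_qterm_pos {r σ d : ℝ} (hr : 0 < r) (hσ : 0 < σ) (hd : 0 < d) :
    0 < ∑' l : ℕ, qterm r σ d l :=
  Summable.tsum_pos (summable_qterm hr hσ hd) (fun l => (qterm_pos hr hσ hd l).le) 0
    (qterm_pos hr hσ hd 0)

/-- `σ ↦ σ * Π₀` is strictly increasing and positive. -/
lemma g_pos {r σ d : ℝ} (hr : 0 < r) (hσ : 0 < σ) (hd : 0 < d) :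
    0 < σ * Pi0 r σ d := by
  have := tsum_qterm_pos hr hσ hd
  unfold Pi0
  positivity

lemma g_strictMono {r d σ₁ σ₂ : ℝ} (hr : 0 < r) (hd : 0 < d) (h1 : 0 < σ₁) (h12 : σ₁ < σ₂) :
    σ₁ * Pi0 r σ₁ d < σ₂ * Pi0 r σ₂ d := by
  have h2 : 0 < σ₂ := h1.trans h12
  -- compare G σ = ∑' l, qterm r σ d l / σ
  have hsum1 : Summable (fun l => qterm r σ₁ d l / σ₁) := (summable_qterm hr h1 hd).div_const _
  have hsum2 : Summable (fun l => qterm r σ₂ d l / σ₂) := (summable_qterm hr h2 hd).div_const _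
  have hle : ∀ l, qterm r σ₂ d l / σ₂ ≤ qterm r σ₁ d l / σ₁ := by
    intro l
    unfold qterm
    rw [div_div, div_div]
    have hP1 := prod_pos' h1 hd l
    have hprod : (∏ m ∈ Finset.Icc 1 l, (σ₁ + (m : ℝ) * d))
        ≤ ∏ m ∈ Finset.Icc 1 l, (σ₂ + (m : ℝ) * d) := by
      apply Finset.prod_le_prod
      · intro m hm
        have : (0:ℝ) ≤ (m:ℝ) * d := by positivity
        linarith
      · intro m hm; linarith
    gcongr
  have h0 : qterm r σ₂ d 0 / σ₂ < qterm r σ₁ d 0 / σ₁ := by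
    have : qterm r σ₁ d 0 = 1 := by simp [qterm]
    have h' : qterm r σ₂ d 0 = 1 := by simp [qterm]
    rw [this, h']
    exact one_div_lt_one_div_of_lt h1 h12
  have hlt : ∑' l : ℕ, qterm r σ₂ d l / σ₂ < ∑' l : ℕ, qterm r σ₁ d l / σ₁ :=
    Summable.tsum_lt_tsum hle h0 hsum2 hsum1
  have hG2pos : 0 < ∑' l : ℕ, qterm r σ₂ d l / σ₂ :=
    Summable.tsum_pos hsum2 (fun l => div_nonneg (qterm_pos hr h2 hd l).le h2.le) 0
      (div_pos (qterm_pos hr h2 hd 0) h2)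
  have key : ∀ σ : ℝ, 0 < σ → σ * Pi0 r σ d = (∑' l : ℕ, qterm r σ d l / σ)⁻¹ := by
    intro σ hσ
    rw [tsum_div_const, Pi0]
    have hS := tsum_qterm_pos hr hσ hd
    field_simp
  rw [key σ₁ h1, key σ₂ h2]
  exact inv_strictAnti₀ hG2pos hlt

theorem stmt8 (r s d v f : ℝ) (hr : 0 < r) (hs : 0 < s) (hd : 0 < d) (hv : 0 < v)
    (hf : f ∈ Set.Ioc (0 : ℝ) 1) :
    let Z : ℕ → ℝ := fun l =>
      v * s * (1 - (s * f * Pi0 r (s * f) d)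
        / ((s * f + (l : ℝ) * d) * Pi0 r (s * f + (l : ℝ) * d) d))
    (∀ l k : ℕ, 1 ≤ l → l < k → Z l < Z k) ∧
    (∀ l : ℕ, 1 ≤ l → 0 < Z l ∧ Z l < v * s) := by
  intro Z
  have hA : 0 < s * f := mul_pos hs hf.1
  have hgA : 0 < s * f * Pi0 r (s * f) d := g_pos hr hA hd
  have hσ : ∀ l : ℕ, 1 ≤ l → (0 < s * f + (l : ℝ) * d ∧ s * f < s * f + (l : ℝ) * d) := by
    intro l hl
    have : (1:ℝ) ≤ (l:ℝ) := by exact_mod_cast hl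
    constructor <;> nlinarith
  have hvs : 0 < v * s := mul_pos hv hs
  constructor
  · intro l k hl hlk
    have h1 := hσ l hl
    have h2 := hσ k (hl.trans hlk.le)
    have hlt : s * f + (l : ℝ) * d < s * f + (k : ℝ) * d := by
      have : (l:ℝ) < (k:ℝ) := by exact_mod_cast hlk
      nlinarith
    have hg : (s * f + (l : ℝ) * d) * Pi0 r (s * f + (l : ℝ) * d) d
        < (s * f + (k : ℝ) * d) * Pi0 r (s * f + (k : ℝ) * d) d :=
      g_strictMono hr hd h1.1 hlt
    have hgl : 0 < (s * f + (l : ℝ) * d) * Pi0 r (s * f + (l : ℝ) * d) d :=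
      g_pos hr h1.1 hd
    have hdiv : (s * f * Pi0 r (s * f) d) / ((s * f + (k : ℝ) * d) * Pi0 r (s * f + (k : ℝ) * d) d)
        < (s * f * Pi0 r (s * f) d) / ((s * f + (l : ℝ) * d) * Pi0 r (s * f + (l : ℝ) * d) d) := by
      apply div_lt_div_of_pos_left hgA hgl hg
    show v * s * (1 - _) < v * s * (1 - _)
    nlinarith
  · intro l hl
    have h1 := hσ l hl
    have hg : s * f * Pi0 r (s * f) d
        < (s * f + (l : ℝ) * d) * Pi0 r (s * f + (l : ℝ) * d) d :=
      g_strictMono hr hd hA h1.2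
    have hgl : 0 < (s * f + (l : ℝ) * d) * Pi0 r (s * f + (l : ℝ) * d) d :=
      g_pos hr h1.1 hd
    have hratio1 : (s * f * Pi0 r (s * f) d)
        / ((s * f + (l : ℝ) * d) * Pi0 r (s * f + (l : ℝ) * d) d) < 1 :=
      (div_lt_one hgl).mpr hg
    have hratio0 : 0 < (s * f * Pi0 r (s * f) d)
        / ((s * f + (l : ℝ) * d) * Pi0 r (s * f + (l : ℝ) * d) d) := div_pos hgA hgl
    constructor
    · show 0 < v * s * (1 - _); nlinarith
    · show v * s * (1 - _) < v * s; nlinarith
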